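/- Fix γ, η, θ, σ, τ ∈ ℝ. Let X be an ℝ-linear operator on ℝ[X], and for each t ≥ 0 let M_t and A_t be ℝ-linear operators on ℝ[X] such that: (1) each M_t is bijective, with inverse M_t⁻¹; (2) F∘M_t = M_t∘(F + t·X) for all t ≥ 0; (3) for every polynomial p, every coefficient index j ≥ 0, and every t > 0, the function s ↦ (the j-th coefficient of M_s(p)) is differentiable at s = t with derivative equal to −(the j-th coefficient of A_t(M_t(p))); and (4) X∘F − γ·F∘X = id + η·F + θ·X + σ·F∘F + τ·X∘X. For t > 0 set H_t = A_t∘F − F∘A_t and T_t = F − t·H_t. Then H_t = M_t∘X∘M_t⁻¹ and T_t = M_t∘F∘M_t⁻¹, and consequently H_t∘T_t − γ·T_t∘H_t = id + θ·H_t + η·T_t + τ·H_t∘H_t + σ·T_t∘T_t. -/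

import Mathlib

open Polynomial

/-- The operator of multiplication by `X` on `ℝ[X]`. -/
noncomputable def F : Module.End ℝ (Polynomial ℝ) := LinearMap.mulLeft ℝ (X : Polynomial ℝ)

/-- Theorem 2.1: if `F ∘ M_t = M_t ∘ (F + t X)`, the generator `A_t` satisfies
`A_t M_t = -∂_t M_t` (coefficientwise), and `X` satisfies the quadratic commutation
equation, then `H_t = A_t∘F - F∘A_t = M_t X M_t⁻¹`, `T_t = F - t H_t = M_t F M_t⁻¹`,
and `H_t, T_t` satisfy the corresponding commutation equation. -/
theorem stmt2 (γ η θ σ τ : ℝ)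
    (𝕏 : Module.End ℝ (Polynomial ℝ))
    (M Minv A : ℝ → Module.End ℝ (Polynomial ℝ))
    (hM : ∀ t : ℝ, 0 ≤ t → M t * Minv t = 1 ∧ Minv t * M t = 1)
    (hharness : ∀ t : ℝ, 0 ≤ t → F * M t = M t * (F + t • 𝕏))
    (hderiv : ∀ (p : Polynomial ℝ) (j : ℕ) (t : ℝ), 0 < t →
      HasDerivAt (fun s : ℝ => ((M s) p).coeff j) (-(((A t) ((M t) p)).coeff j)) t)
    (hX : 𝕏 * F - γ • (F * 𝕏) = 1 + η • F + θ • 𝕏 + σ • (F * F) + τ • (𝕏 * 𝕏)) :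
    ∀ t : ℝ, 0 < t → ∀ H T : Module.End ℝ (Polynomial ℝ),
      H = A t * F - F * A t → T = F - t • H →
      H = M t * 𝕏 * Minv t ∧ T = M t * F * Minv t ∧
      H * T - γ • (T * H) = 1 + θ • H + η • T + τ • (H * H) + σ • (T * T) := by
  intro t ht H T hH hT
  have ht' : (0:ℝ) ≤ t := ht.le
  -- pointwise form of the harness relation
  have happ : ∀ s : ℝ, 0 ≤ s → ∀ p : Polynomial ℝ,
      X * (M s) p = (M s) (F p) + s • (M s) (𝕏 p) := by
    intro s hs p
    have := congrArg (fun L : Module.End ℝ (Polynomial ℝ) => L p) (hharness s hs)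
    simpa [F, Module.End.mul_apply, LinearMap.mulLeft_apply, map_add, map_smul] using this
  -- key derivative computation
  have key : ∀ p : Polynomial ℝ, (A t * F - F * A t) ((M t) p) = (M t) (𝕏 p) := by
    intro p
    have hpoly : -((A t) ((M t) (F p))) + ((M t) (𝕏 p) - t • (A t) ((M t) (𝕏 p)))
        = -(X * (A t) ((M t) p)) := by
      ext j
      have hg : HasDerivAt (fun s : ℝ => ((M s) (F p)).coeff j + s * ((M s) (𝕏 p)).coeff j)
          (-(((A t) ((M t) (F p))).coeff j)
            + (1 * ((M t) (𝕏 p)).coeff j + t * -(((A t) ((M t) (𝕏 p))).coeff j))) t :=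
        (hderiv (F p) j t ht).add ((hasDerivAt_id t).mul (hderiv (𝕏 p) j t ht))
      have hev : (fun s : ℝ => ((M s) (F p)).coeff j + s * ((M s) (𝕏 p)).coeff j)
          =ᶠ[nhds t] fun s : ℝ => (X * (M s) p).coeff j := by
        filter_upwards [isOpen_Ioi.mem_nhds (show t ∈ Set.Ioi (0:ℝ) from ht)] with s hs
        rw [happ s (le_of_lt hs) p]
        simp [Polynomial.coeff_smul, smul_eq_mul]
      have hg' : HasDerivAt (fun s : ℝ => (X * (M s) p).coeff j)
          (-(((A t) ((M t) (F p))).coeff j)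
            + (1 * ((M t) (𝕏 p)).coeff j + t * -(((A t) ((M t) (𝕏 p))).coeff j))) t :=
        hg.congr_of_eventuallyEq hev.symm
      cases j with
      | zero =>
          have hconst : HasDerivAt (fun _ : ℝ => (0:ℝ)) 0 t := hasDerivAt_const t 0
          have hz : (fun s : ℝ => (X * (M s) p).coeff 0) = fun _ : ℝ => (0:ℝ) := by
            funext s; simp [Polynomial.mul_coeff_zero]
          have := hg'.unique (hz ▸ hconst)
          simp [Polynomial.coeff_smul, smul_eq_mul, Polynomial.mul_coeff_zero] at this ⊢
          linarith
      | succ k =>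
          have hXmul : (fun s : ℝ => (X * (M s) p).coeff (k+1))
              = fun s : ℝ => ((M s) p).coeff k := by
            funext s; simp [Polynomial.coeff_X_mul]
          have := hg'.unique (hXmul ▸ hderiv p k t ht)
          simp only [Polynomial.coeff_add, Polynomial.coeff_neg, Polynomial.coeff_sub,
            Polynomial.coeff_smul, smul_eq_mul, Polynomial.coeff_X_mul]
          linarith
    -- now assemble
    have hF : F ((M t) p) = (M t) (F p) + t • (M t) (𝕏 p) := by
      simpa [F, LinearMap.mulLeft_apply] using happ t ht' p
    have hXA : X * (A t) ((M t) p) = F ((A t) ((M t) p)) := by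
      simp [F, LinearMap.mulLeft_apply]
    rw [LinearMap.sub_apply, Module.End.mul_apply, Module.End.mul_apply, hF, map_add, map_smul]
    rw [← hXA]
    have := hpoly
    -- goal : A(M(Fp)) + t • A(M(𝕏p)) - X * A(Mp) = M(𝕏p)
    have h2 : X * (A t) ((M t) p)
        = t • (A t) ((M t) (𝕏 p)) - (M t) (𝕏 p) + (A t) ((M t) (F p)) := by
      have := congrArg Neg.neg hpoly
      simpa [neg_add, neg_sub] using this.symm
    rw [h2]; abel
  -- H = M 𝕏 M⁻¹
  have hHeq : H = M t * 𝕏 * Minv t := by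
    refine LinearMap.ext fun q => ?_
    have h1 : (M t) ((Minv t) q) = q := by
      have := congrArg (fun L : Module.End ℝ (Polynomial ℝ) => L q) (hM t ht').1
      simpa [Module.End.mul_apply] using this
    rw [hH]
    conv_lhs => rw [← h1]
    rw [key ((Minv t) q)]
    simp [Module.End.mul_apply]
  -- T = M F M⁻¹
  have hTeq : T = M t * F * Minv t := by
    have h1 : F * (M t * Minv t) = F := by rw [(hM t ht').1, mul_one]
    have : M t * F * Minv t = F - t • (M t * 𝕏 * Minv t) := by
      have h2 : F * M t = M t * F + t • (M t * 𝕏) := by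
        rw [hharness t ht', mul_add, mul_smul_comm]
      calc M t * F * Minv t = (F * M t - t • (M t * 𝕏)) * Minv t := by
            rw [h2, add_sub_cancel_right]
          _ = F * (M t * Minv t) - t • (M t * 𝕏 * Minv t) := by
            rw [sub_mul, smul_mul_assoc, mul_assoc]
          _ = F - t • (M t * 𝕏 * Minv t) := by rw [h1]
    rw [hT, hHeq, this]
  refine ⟨hHeq, hTeq, ?_⟩
  -- conjugation identity
  have hconj : ∀ a b : Module.End ℝ (Polynomial ℝ),
      (M t * a * Minv t) * (M t * b * Minv t) = M t * (a * b) * Minv t := by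
    intro a b
    have h2 := (hM t ht').2
    calc (M t * a * Minv t) * (M t * b * Minv t)
        = M t * a * ((Minv t * M t) * (b * Minv t)) := by
          simp only [mul_assoc]
      _ = M t * (a * b) * Minv t := by rw [h2, one_mul]; simp only [mul_assoc]
  rw [hHeq, hTeq, hconj, hconj]
  have hsmul : ∀ (c : ℝ) (a : Module.End ℝ (Polynomial ℝ)),
      c • (M t * a * Minv t) = M t * (c • a) * Minv t := by
    intro c a
    rw [mul_smul_comm, smul_mul_assoc]
  rw [hsmul γ, show M t * (𝕏 * F) * Minv t - M t * (γ • (F * 𝕏)) * Minv t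
        = M t * (𝕏 * F - γ • (F * 𝕏)) * Minv t by rw [mul_sub, sub_mul],
    hX]
  have h1 : M t * (1 : Module.End ℝ (Polynomial ℝ)) * Minv t = 1 := by
    rw [mul_one, (hM t ht').1]
  rw [hconj, hconj]
  simp only [mul_add, add_mul, hsmul, h1]
  abel
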